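/- Let Σ be a bipartite graph with bipartition X ∪ Y in which every vertex of X has at least one neighbor. If A ⊆ X is a 2-linked set, then its closure [A] is also 2-linked. -/

import Mathlib

open Finset

/-- `distLE G m u v` : there is a walk of length at most `m` from `u` to `v`. -/
def distLE {V : Type} (G : SimpleGraph V) (m : ℕ) (u v : V) : Prop :=
  ∃ p : G.Walk u v, p.length ≤ m

/-- `MLinked G m A` : the set `A` is `m`-linked. -/
def MLinked {V : Type} (G : SimpleGraph V) (m : ℕ) (A : Finset V) : Prop :=
  ∀ u ∈ A, ∀ v ∈ A,
    Relation.ReflTransGen (fun a b => a ∈ A ∧ b ∈ A ∧ distLE G m a b) u v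

/-- The neighborhood `N(A)` of a set of vertices. -/
def nbhd {V : Type} [Fintype V] [DecidableEq V] (G : SimpleGraph V)
    [DecidableRel G.Adj] (A : Finset V) : Finset V :=
  A.biUnion fun v => G.neighborFinset v

/-- The closure `[A] = {v ∈ X : N(v) ⊆ N(A)}` of `A ⊆ X`. -/
def closureOf {V : Type} [Fintype V] [DecidableEq V] (G : SimpleGraph V)
    [DecidableRel G.Adj] (X A : Finset V) : Finset V :=
  X.filter fun v => G.neighborFinset v ⊆ nbhd G A

/-- In a bipartite graph in which every vertex of X has at least one
neighbor, the closure of a 2-linked subset of X is 2-linked. -/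
theorem closure_two_linked {V : Type} [Fintype V] [DecidableEq V]
    (G : SimpleGraph V) [DecidableRel G.Adj] (X Y : Finset V)
    (hdisj : Disjoint X Y) (hunion : X ∪ Y = Finset.univ)
    (hbip : ∀ u v : V, G.Adj u v → (u ∈ X ∧ v ∈ Y) ∨ (u ∈ Y ∧ v ∈ X))
    (hmindeg : ∀ x ∈ X, ∃ y : V, G.Adj x y)
    (A : Finset V) (hAX : A ⊆ X) (hA2 : MLinked G 2 A) :
    MLinked G 2 (closureOf G X A) := by
  -- A ⊆ closureOf G X A
  have hsub : A ⊆ closureOf G X A := by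
    intro a ha
    simp only [closureOf, mem_filter]
    exact ⟨hAX ha, fun y hy => mem_biUnion.mpr ⟨a, ha, hy⟩⟩
  -- every element of the closure is within distance 2 of some element of A
  have hclose : ∀ v ∈ closureOf G X A, ∃ a ∈ A, distLE G 2 v a := by
    intro v hv
    simp only [closureOf, mem_filter] at hv
    obtain ⟨y, hy⟩ := hmindeg v hv.1
    have hyN : y ∈ nbhd G A := hv.2 ((G.mem_neighborFinset v y).mpr hy)
    obtain ⟨a, ha, hay⟩ := mem_biUnion.mp hyN
    rw [G.mem_neighborFinset] at hay
    exact ⟨a, ha, SimpleGraph.Walk.cons hy (SimpleGraph.Walk.cons hay.symm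
      SimpleGraph.Walk.nil), by simp⟩
  intro u hu v hv
  obtain ⟨au, hauA, pu⟩ := hclose u hu
  obtain ⟨av, havA, pv⟩ := hclose v hv
  have h1 : Relation.ReflTransGen
      (fun a b => a ∈ closureOf G X A ∧ b ∈ closureOf G X A ∧ distLE G 2 a b) au av :=
    Relation.ReflTransGen.mono (fun a b h => ⟨hsub h.1, hsub h.2.1, h.2.2⟩) au av (hA2 au hauA av havA)
  refine Relation.ReflTransGen.trans (Relation.ReflTransGen.single
    ⟨hu, hsub hauA, pu⟩) (h1.trans (Relation.ReflTransGen.single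
    ⟨hsub havA, hv, ?_⟩))
  obtain ⟨p, hp⟩ := pv
  exact ⟨p.reverse, by simpa using hp⟩
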